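/- For every nonnegative integer j, H_3(j) = (1/8)j^4 + (3/4)j^3 + (15/8)j^2 + (9/4)j + 1; equivalently, 8·H_3(j) = j^4 + 6j^3 + 15j^2 + 18j + 8. -/
import Mathlib

open Finset

/-- `H k j`: the number of `k × k` matrices with nonnegative integer entries
such that every row sum and every column sum equals `j`. -/
noncomputable def H (k j : ℕ) : ℕ :=
  Nat.card {A : Matrix (Fin k) (Fin k) ℕ //
    (∀ i, ∑ j', A i j' = j) ∧ (∀ j', ∑ i, A i j' = j)}

@[simp] lemma vec6_at0 {α : Type*} (a b c d e f : α) : ![a,b,c,d,e,f] (0 : Fin 6) = a := rfl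
@[simp] lemma vec6_at1 {α : Type*} (a b c d e f : α) : ![a,b,c,d,e,f] (1 : Fin 6) = b := rfl
@[simp] lemma vec6_at2 {α : Type*} (a b c d e f : α) : ![a,b,c,d,e,f] (2 : Fin 6) = c := rfl
@[simp] lemma vec6_at3 {α : Type*} (a b c d e f : α) : ![a,b,c,d,e,f] (3 : Fin 6) = d := rfl
@[simp] lemma vec6_at4 {α : Type*} (a b c d e f : α) : ![a,b,c,d,e,f] (4 : Fin 6) = e := rfl
@[simp] lemma vec6_at5 {α : Type*} (a b c d e f : α) : ![a,b,c,d,e,f] (5 : Fin 6) = f := rfl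

instance instFinSum (j : ℕ) : Finite {P : Fin 6 → ℕ // ∑ i, P i = j} :=
  Finite.of_equiv _ (Sym.equivNatSumOfFintype (Fin 6) j)

instance instFinSum2 (j : ℕ) (Q : (Fin 6 → ℕ) → Prop) :
    Finite {P : Fin 6 → ℕ // (∑ i, P i = j) ∧ Q P} :=
  Finite.of_injective (fun x => (⟨x.1, x.2.1⟩ : {P : Fin 6 → ℕ // ∑ i, P i = j}))
    (fun a b hab => Subtype.ext (by simpa using congrArg Subtype.val hab))

lemma cardSum (n : ℕ) : Nat.card {P : Fin 6 → ℕ // ∑ i, P i = n} = (n+5).choose 5 := by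
  rw [← Nat.card_congr (Sym.equivNatSumOfFintype (Fin 6) n), Nat.card_eq_fintype_card,
    Sym.card_sym_eq_multichoose, Nat.multichoose_eq]
  simp only [Fintype.card_fin]
  rw [show 6 + n - 1 = 5 + n by omega, show n + 5 = 5 + n by omega, Nat.choose_symm_add]

lemma shiftCard (j : ℕ) :
    Nat.card {P : Fin 6 → ℕ // (∑ i, P i = j) ∧
      ¬(P 3 = 0 ∨ P 4 = 0 ∨ P 5 = 0)} = (j+2).choose 5 := by
  rcases Nat.lt_or_ge j 3 with hj | hj
  · rw [Nat.choose_eq_zero_of_lt (by omega), Nat.card_eq_zero]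
    left
    constructor
    rintro ⟨P, hs, hq⟩
    push_neg at hq
    rw [Fin.sum_univ_six] at hs
    obtain ⟨h3, h4, h5⟩ := hq
    omega
  · obtain ⟨m, rfl⟩ : ∃ m, j = m + 3 := ⟨j - 3, by omega⟩
    have e : {P : Fin 6 → ℕ // (∑ i, P i = m + 3) ∧
        ¬(P 3 = 0 ∨ P 4 = 0 ∨ P 5 = 0)} ≃ {P : Fin 6 → ℕ // ∑ i, P i = m} := by
      refine ⟨fun P => ⟨![P.1 0, P.1 1, P.1 2, P.1 3 - 1, P.1 4 - 1, P.1 5 - 1], ?_⟩,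
        fun P => ⟨![P.1 0, P.1 1, P.1 2, P.1 3 + 1, P.1 4 + 1, P.1 5 + 1], ?_, ?_⟩, ?_, ?_⟩
      · have hs := P.2.1
        have hq := P.2.2
        push_neg at hq
        rw [Fin.sum_univ_six] at hs ⊢
        simp only [vec6_at0, vec6_at1, vec6_at2, vec6_at3, vec6_at4, vec6_at5]
        omega
      · have hs := P.2
        rw [Fin.sum_univ_six] at hs ⊢
        simp only [vec6_at0, vec6_at1, vec6_at2, vec6_at3, vec6_at4, vec6_at5]
        omega
      · simp only [vec6_at0, vec6_at1, vec6_at2, vec6_at3, vec6_at4, vec6_at5]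
        push_neg
        omega
      · intro P
        have hq := P.2.2
        push_neg at hq
        apply Subtype.ext
        funext i
        fin_cases i <;> simp <;> omega
      · intro P
        apply Subtype.ext
        funext i
        fin_cases i <;> simp <;> omega
    rw [Nat.card_congr e, cardSum, show m + 3 + 2 = m + 5 by omega]

set_option maxHeartbeats 1000000 in
def matEquiv (j : ℕ) :
    {A : Matrix (Fin 3) (Fin 3) ℕ //
      (∀ i, ∑ j', A i j' = j) ∧ (∀ j', ∑ i, A i j' = j)} ≃
    {P : Fin 6 → ℕ // (∑ i, P i = j) ∧ (P 3 = 0 ∨ P 4 = 0 ∨ P 5 = 0)} where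
  toFun M :=
    ⟨![M.1 0 0 - ((M.1 0 0 - M.1 1 1) + ((M.1 0 0 - M.1 2 2) - (M.1 0 0 - M.1 1 1))),
       M.1 1 2 - ((M.1 0 0 - M.1 1 1) + ((M.1 0 0 - M.1 2 2) - (M.1 0 0 - M.1 1 1))),
       M.1 2 1 - ((M.1 0 0 - M.1 1 1) + ((M.1 0 0 - M.1 2 2) - (M.1 0 0 - M.1 1 1))),
       (M.1 0 0 - M.1 1 1) + ((M.1 0 0 - M.1 2 2) - (M.1 0 0 - M.1 1 1)),
       ((M.1 0 0 - M.1 1 1) + ((M.1 0 0 - M.1 2 2) - (M.1 0 0 - M.1 1 1))) + M.1 1 1 - M.1 0 0,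
       ((M.1 0 0 - M.1 1 1) + ((M.1 0 0 - M.1 2 2) - (M.1 0 0 - M.1 1 1))) + M.1 2 2 - M.1 0 0], by
      have h1 := M.2.1 0; have h2 := M.2.1 1; have h3 := M.2.1 2
      have h4 := M.2.2 0; have h5 := M.2.2 1; have h6 := M.2.2 2
      rw [Fin.sum_univ_three] at h1 h2 h3 h4 h5 h6
      constructor
      · rw [Fin.sum_univ_six]
        simp only [vec6_at0, vec6_at1, vec6_at2, vec6_at3, vec6_at4, vec6_at5]
        omega
      · simp only [vec6_at0, vec6_at1, vec6_at2, vec6_at3, vec6_at4, vec6_at5]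
        omega⟩
  invFun P :=
    ⟨!![P.1 0 + P.1 3, P.1 1 + P.1 5, P.1 2 + P.1 4;
        P.1 2 + P.1 5, P.1 0 + P.1 4, P.1 1 + P.1 3;
        P.1 1 + P.1 4, P.1 2 + P.1 3, P.1 0 + P.1 5], by
      have hs := P.2.1
      rw [Fin.sum_univ_six] at hs
      constructor <;> intro i <;> fin_cases i <;>
        rw [Fin.sum_univ_three] <;> simp <;> omega⟩
  left_inv M := by
    have h1 := M.2.1 0; have h2 := M.2.1 1; have h3 := M.2.1 2
    have h4 := M.2.2 0; have h5 := M.2.2 1; have h6 := M.2.2 2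
    rw [Fin.sum_univ_three] at h1 h2 h3 h4 h5 h6
    apply Subtype.ext
    simp only [vec6_at0, vec6_at1, vec6_at2, vec6_at3, vec6_at4, vec6_at5]
    ext i k
    fin_cases i <;> fin_cases k <;> simp <;> omega
  right_inv P := by
    have hs := P.2.1
    have hq := P.2.2
    rw [Fin.sum_univ_six] at hs
    apply Subtype.ext
    funext i
    fin_cases i <;> simp <;> omega

lemma splitCard (j : ℕ) :
    Nat.card {P : Fin 6 → ℕ // (∑ i, P i = j) ∧ (P 3 = 0 ∨ P 4 = 0 ∨ P 5 = 0)} +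
    Nat.card {P : Fin 6 → ℕ // (∑ i, P i = j) ∧ ¬(P 3 = 0 ∨ P 4 = 0 ∨ P 5 = 0)} =
    (j+5).choose 5 := by
  classical
  rw [← cardSum j, ← Nat.card_sum]
  apply Nat.card_congr
  exact (Equiv.sumCongr
    (Equiv.subtypeSubtypeEquivSubtypeInter _ _).symm
    (Equiv.subtypeSubtypeEquivSubtypeInter _ _).symm).trans
    (Equiv.sumCompl fun x : {P : Fin 6 → ℕ // ∑ i, P i = j} =>
      x.1 3 = 0 ∨ x.1 4 = 0 ∨ x.1 5 = 0)

lemma ch5 (n : ℕ) : 120 * (n+5).choose 5 = (n+1)*(n+2)*(n+3)*(n+4)*(n+5) := by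
  have h := Nat.descFactorial_eq_factorial_mul_choose (n+5) 5
  have h2 : (n+5).descFactorial 5 = (n+1)*(n+2)*(n+3)*(n+4)*(n+5) := by
    simp [Nat.descFactorial_succ, show n+5-4 = n+1 from rfl, show n+5-3 = n+2 from rfl,
      show n+5-2 = n+3 from rfl, show n+5-1 = n+4 from rfl]
    ring
  rw [show (120 : ℕ) = Nat.factorial 5 from rfl, ← h, h2]

theorem H_three_poly (j : ℕ) :
    8 * H 3 j = j ^ 4 + 6 * j ^ 3 + 15 * j ^ 2 + 18 * j + 8 := by
  have key : H 3 j + (j+2).choose 5 = (j+5).choose 5 := by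
    rw [H, Nat.card_congr (matEquiv j), ← shiftCard j]
    exact splitCard j
  apply Nat.eq_of_mul_eq_mul_left (show 0 < 15 by norm_num)
  have key120 : 120 * H 3 j + 120 * ((j+2).choose 5) = 120 * ((j+5).choose 5) := by
    rw [← Nat.mul_add, key]
  rw [← mul_assoc]
  norm_num
  rcases Nat.lt_or_ge j 3 with hj | hj
  · interval_cases j <;> simp_all [Nat.choose] <;> omega
  · obtain ⟨m, rfl⟩ : ∃ m, j = m + 3 := ⟨j - 3, by omega⟩
    have c1 := ch5 (m + 3)
    have c2 := ch5 m
    rw [show m + 3 + 5 = m + 3 + 5 from rfl] at c1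
    rw [show m + 3 + 2 = m + 5 by omega] at key120
    rw [c2] at key120
    -- key120 : 120 * H + (m+1)(m+2)(m+3)(m+4)(m+5) = 120 * ((m+3+5).choose 5)
    rw [c1] at key120
    have : 120 * H 3 (m + 3) = 15 * ((m+3)^4 + 6*(m+3)^3 + 15*(m+3)^2 + 18*(m+3) + 8) := by
      nlinarith [key120]
    omega
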